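/- Let X and Y be independent nonnegative real-valued random variables on a probability space, both exponentially distributed with the same rate a > 0. Then for all c1 > 0 and c2 > 0, setting B = c1 + c2, the strict inequality 1 − e^{−a·B}·(1 + a·B) > (1 − e^{−a·c1})·(1 − e^{−a·c2}) holds. -/

import Mathlib

open MeasureTheory ProbabilityTheory Real

/-- Joint latency management strictly outperforms any disjoint split of the
same budget (equal exponential rates). -/
theorem joint_strictly_beats_disjoint_equal_rates
    {Ω : Type*} [MeasureSpace Ω] [IsProbabilityMeasure (ℙ : Measure Ω)]
    (X Y : Ω → ℝ) (hX : Measurable X) (hY : Measurable Y)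
    (hXnn : ∀ ω, 0 ≤ X ω) (hYnn : ∀ ω, 0 ≤ Y ω)
    (hind : IndepFun X Y)
    (a : ℝ) (ha : 0 < a)
    (hXd : Measure.map X ℙ = expMeasure a)
    (hYd : Measure.map Y ℙ = expMeasure a)
    (c1 c2 B : ℝ) (hc1 : 0 < c1) (hc2 : 0 < c2) (hB : B = c1 + c2) :
    1 - exp (-a * B) * (1 + a * B)
      > (1 - exp (-a * c1)) * (1 - exp (-a * c2)) := by
  subst hB
  set x := a * c1 with hx
  set y := a * c2 with hy
  have hxpos : 0 < x := mul_pos ha hc1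
  have hypos : 0 < y := mul_pos ha hc2
  have hu : exp (-x) * (1 + x) < 1 := by
    have h := add_one_lt_exp (ne_of_gt hxpos)
    have hex : 0 < exp x := exp_pos x
    rw [exp_neg]
    rw [inv_mul_lt_iff₀ hex, mul_one]
    linarith
  have hv : exp (-y) * (1 + y) < 1 := by
    have h := add_one_lt_exp (ne_of_gt hypos)
    have hey : 0 < exp y := exp_pos y
    rw [exp_neg, inv_mul_lt_iff₀ hey, mul_one]
    linarith
  have hsum : -a * (c1 + c2) = -x + -y := by ring
  rw [hsum, exp_add]
  have hupos : 0 < exp (-x) := exp_pos _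
  have hvpos : 0 < exp (-y) := exp_pos _
  have hax : -a * c1 = -x := by ring
  have hay : -a * c2 = -y := by ring
  rw [hax, hay]
  have haB : a * (c1 + c2) = x + y := by ring
  rw [haB]
  nlinarith [mul_pos hupos hvpos, mul_lt_of_lt_one_left hvpos hu,
    mul_lt_of_lt_one_left hupos hv]
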